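/- For every real number 0 < q < 1, every positive integer k, and every real t > 0, the q,k-gamma function is given by the convergent series Γ_{q,k}(t) = (1-q)^{1-t/k} · ∑_{n=0}^∞ q^{kn(n+1)/2} / ( (1-q^{kn+t}) (q^k - 1)^n [n]_{q^k}! ). -/

import Mathlib

/-- The q,k-gamma function
Γ_{q,k}(t) = (1-q)^(1-t/k) · ∏_{j=0}^∞ (1-q^{k(j+1)})/(1-q^{t+jk}). -/
noncomputable def qkGamma (q : ℝ) (k : ℕ) (t : ℝ) : ℝ :=
  (1 - q) ^ (1 - t / (k : ℝ)) *
    ∏' j : ℕ, (1 - q ^ ((k : ℝ) * ((j : ℝ) + 1))) / (1 - q ^ (t + (j : ℝ) * (k : ℝ)))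

/-- The Q-factorial [n]_Q! = ∏_{j=1}^n (1-Q^j)/(1-Q). -/
noncomputable def qFact (Q : ℝ) (n : ℕ) : ℝ :=
  ∏ j ∈ Finset.range n, (1 - Q ^ (j + 1)) / (1 - Q)
open Finset Filter Real Topology

namespace QkAux

noncomputable def P (Q z : ℝ) (N : ℕ) : ℝ := ∏ j ∈ Finset.range N, (1 - z * Q ^ j)

lemma P_succ (Q z : ℝ) (N : ℕ) : P Q z (N + 1) = P Q z N * (1 - z * Q ^ N) :=
  Finset.prod_range_succ _ _

lemma P_zero (Q z : ℝ) : P Q z 0 = 1 := by simp [P]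

lemma exp_le_one_sub {a b : ℝ} (ha : 0 ≤ a) (hab : a ≤ b) (hb : b < 1) :
    Real.exp (-(a / (1 - b))) ≤ 1 - a := by
  have hb1 : 0 < 1 - b := by linarith
  have ha1 : 0 < 1 - a := by linarith
  have h2 : (1 - a)⁻¹ ≤ Real.exp (a / (1 - a)) := by
    have h1 : a / (1 - a) + 1 ≤ Real.exp (a / (1 - a)) := Real.add_one_le_exp _
    have : (1 - a)⁻¹ = a / (1 - a) + 1 := by field_simp; ring
    linarith
  have h3 : Real.exp (-(a / (1 - a))) ≤ 1 - a := by
    rw [Real.exp_neg]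
    calc (Real.exp (a / (1 - a)))⁻¹ ≤ ((1 - a)⁻¹)⁻¹ := inv_anti₀ (by positivity) h2
      _ = 1 - a := inv_inv _
  refine le_trans (Real.exp_le_exp.mpr (neg_le_neg ?_)) h3
  exact div_le_div_of_nonneg_left ha hb1 (by linarith)

variable {Q : ℝ}

lemma factor_pos (hQ0 : 0 ≤ Q) (hQ1 : Q ≤ 1) {z : ℝ} (hz0 : 0 ≤ z) (hz1 : z < 1) (j : ℕ) :
    0 < 1 - z * Q ^ j := by
  have h1 : Q ^ j ≤ 1 := pow_le_one₀ hQ0 hQ1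
  nlinarith [pow_nonneg hQ0 j]

lemma P_pos (hQ0 : 0 ≤ Q) (hQ1 : Q ≤ 1) {z : ℝ} (hz0 : 0 ≤ z) (hz1 : z < 1) (N : ℕ) :
    0 < P Q z N :=
  Finset.prod_pos fun j _ => factor_pos hQ0 hQ1 hz0 hz1 j

lemma c_le_P (hQ0 : 0 < Q) (hQ1 : Q < 1) {z : ℝ} (hz0 : 0 ≤ z) (hz1 : z < 1) (N : ℕ) :
    Real.exp (-(z / ((1 - z) * (1 - Q)))) ≤ P Q z N := by
  have hz1' : 0 < 1 - z := by linarith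
  have hQ1' : 0 < 1 - Q := by linarith
  have step2 : Real.exp (∑ j ∈ Finset.range N, -(z * Q ^ j / (1 - z))) ≤ P Q z N := by
    rw [Real.exp_sum]
    refine Finset.prod_le_prod (fun j _ => (Real.exp_pos _).le) (fun j _ => ?_)
    refine exp_le_one_sub ?_ ?_ hz1
    · positivity
    · have : Q ^ j ≤ 1 := pow_le_one₀ hQ0.le hQ1.le
      nlinarith [pow_nonneg hQ0.le j]
  refine le_trans (Real.exp_le_exp.mpr ?_) step2
  have hsum : ∑ j ∈ Finset.range N, Q ^ j ≤ (1 - Q)⁻¹ := by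
    refine le_trans (Summable.sum_le_tsum _ (fun i _ => by positivity) ?_)
      (tsum_geometric_of_lt_one hQ0.le hQ1).le
    exact summable_geometric_of_lt_one hQ0.le hQ1
  have e1 : ∑ j ∈ Finset.range N, -(z * Q ^ j / (1 - z))
      = -(z * (∑ j ∈ Finset.range N, Q ^ j) / (1 - z)) := by
    rw [Finset.mul_sum, Finset.sum_div, Finset.sum_neg_distrib]
  rw [e1, neg_le_neg_iff]
  have e2 : z / ((1 - z) * (1 - Q)) = z * (1 - Q)⁻¹ / (1 - z) := by
    rw [mul_comm (1 - z), div_mul_eq_div_div, div_eq_mul_inv z]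
  rw [e2]
  gcongr

/-- `c Q` : uniform positive lower bound for `P Q Q N`. -/
noncomputable def c (Q : ℝ) : ℝ := Real.exp (-(Q / ((1 - Q) * (1 - Q))))

lemma c_pos : 0 < c Q := Real.exp_pos _

lemma c_le_PQQ (hQ0 : 0 < Q) (hQ1 : Q < 1) (N : ℕ) : c Q ≤ P Q Q N :=
  c_le_P hQ0 hQ1 hQ0.le hQ1 N

noncomputable def a (Q : ℝ) (n : ℕ) : ℝ :=
  (-1) ^ n * Q ^ (∑ i ∈ Finset.range n, i) / P Q Q n

noncomputable def eu (Q z : ℝ) : ℝ := ∑' n : ℕ, a Q n * z ^ n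

lemma a_zero : a Q 0 = 1 := by simp [a, P]

lemma a_succ (hQ0 : 0 < Q) (hQ1 : Q < 1) (n : ℕ) :
    a Q (n + 1) * (1 - Q ^ (n + 1)) = -(a Q n * Q ^ n) := by
  have hP : P Q Q (n + 1) = P Q Q n * (1 - Q ^ (n + 1)) := by
    rw [P_succ, ← pow_succ']
  have hPn : P Q Q n ≠ 0 := (P_pos hQ0.le hQ1.le hQ0.le hQ1 n).ne'
  have h1 : (1 : ℝ) - Q ^ (n + 1) ≠ 0 := by
    have : Q ^ (n + 1) < 1 := pow_lt_one₀ hQ0.le hQ1 (Nat.succ_ne_zero n)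
    linarith
  rw [a, a, hP, Finset.sum_range_succ]
  field_simp
  ring

lemma abs_a_le (hQ0 : 0 < Q) (hQ1 : Q < 1) (n : ℕ) : |a Q n| ≤ (c Q)⁻¹ := by
  have hP := c_le_PQQ hQ0 hQ1 n
  have hPpos : 0 < P Q Q n := P_pos hQ0.le hQ1.le hQ0.le hQ1 n
  have h1 : |a Q n| = Q ^ (∑ i ∈ Finset.range n, i) / P Q Q n := by
    rw [a, abs_div, abs_mul, abs_pow, abs_neg, abs_one, one_pow, one_mul,
      abs_of_nonneg (pow_nonneg hQ0.le _), abs_of_pos hPpos]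
  rw [h1, ← one_div]
  exact div_le_div₀ zero_le_one (pow_le_one₀ hQ0.le hQ1.le) c_pos hP

lemma summable_a_mul (hQ0 : 0 < Q) (hQ1 : Q < 1) {z : ℝ} (hz : |z| < 1) :
    Summable fun n : ℕ => a Q n * z ^ n := by
  refine Summable.of_norm_bounded (g := fun n => (c Q)⁻¹ * |z| ^ n)
    (((summable_geometric_of_lt_one (abs_nonneg z) hz)).mul_left _) (fun n => ?_)
  rw [Real.norm_eq_abs, abs_mul, abs_pow]
  exact mul_le_mul_of_nonneg_right (abs_a_le hQ0 hQ1 n) (pow_nonneg (abs_nonneg z) n)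

lemma eu_fun (hQ0 : 0 < Q) (hQ1 : Q < 1) {z : ℝ} (hz0 : 0 ≤ z) (hz1 : z < 1) :
    eu Q z = (1 - z) * eu Q (Q * z) := by
  have habs : |z| < 1 := by rwa [abs_of_nonneg hz0]
  have habs' : |Q * z| < 1 := by
    rw [abs_of_nonneg (by positivity)]
    nlinarith
  have s1 : Summable fun n => a Q n * z ^ n := summable_a_mul hQ0 hQ1 habs
  have s2 : Summable fun n => a Q n * (Q * z) ^ n := summable_a_mul hQ0 hQ1 habs'
  have key : eu Q z - eu Q (Q * z) = -z * eu Q (Q * z) := by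
    rw [eu, eu, ← Summable.tsum_sub s1 s2]
    have hf : Summable fun n => a Q n * z ^ n - a Q n * (Q * z) ^ n := s1.sub s2
    calc ∑' n : ℕ, (a Q n * z ^ n - a Q n * (Q * z) ^ n)
        = (a Q 0 * z ^ 0 - a Q 0 * (Q * z) ^ 0) +
          ∑' n : ℕ, (a Q (n + 1) * z ^ (n + 1) - a Q (n + 1) * (Q * z) ^ (n + 1)) :=
          Summable.tsum_eq_zero_add hf
      _ = ∑' n : ℕ, (a Q (n + 1) * z ^ (n + 1) - a Q (n + 1) * (Q * z) ^ (n + 1)) := by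
          simp
      _ = ∑' n : ℕ, -z * (a Q n * (Q * z) ^ n) := by
          refine tsum_congr fun n => ?_
          have h1 : a Q (n + 1) * z ^ (n + 1) - a Q (n + 1) * (Q * z) ^ (n + 1)
              = (a Q (n + 1) * (1 - Q ^ (n + 1))) * z ^ (n + 1) := by
            rw [mul_pow]; ring
          rw [h1, a_succ hQ0 hQ1 n, mul_pow]
          ring
      _ = -z * eu Q (Q * z) := by rw [tsum_mul_left]; rfl
  linear_combination key

lemma eu_iter (hQ0 : 0 < Q) (hQ1 : Q < 1) {z : ℝ} (hz0 : 0 ≤ z) (hz1 : z < 1) (N : ℕ) :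
    eu Q z = P Q z N * eu Q (Q ^ N * z) := by
  induction N with
  | zero => simp [P_zero]
  | succ N ih =>
    have h0 : 0 ≤ Q ^ N * z := by positivity
    have h1 : Q ^ N * z < 1 := by
      have : Q ^ N ≤ 1 := pow_le_one₀ hQ0.le hQ1.le
      nlinarith
    rw [ih, P_succ, eu_fun hQ0 hQ1 h0 h1]
    have h2 : Q * (Q ^ N * z) = Q ^ (N + 1) * z := by ring
    rw [h2]; ring

lemma abs_eu_sub_one (hQ0 : 0 < Q) (hQ1 : Q < 1) {w : ℝ} (hw0 : 0 ≤ w) (hw1 : w ≤ Q) :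
    |eu Q w - 1| ≤ w * ((c Q)⁻¹ * (1 - Q)⁻¹) := by
  have hw1' : w < 1 := lt_of_le_of_lt hw1 hQ1
  have habs : |w| < 1 := by rwa [abs_of_nonneg hw0]
  have hs : Summable fun n => a Q n * w ^ n := summable_a_mul hQ0 hQ1 habs
  have hs' : Summable fun n => a Q (n + 1) * w ^ (n + 1) := by
    exact_mod_cast hs.comp_injective (add_left_injective 1)
  have h0 : eu Q w - 1 = ∑' n : ℕ, a Q (n + 1) * w ^ (n + 1) := by
    rw [eu, Summable.tsum_eq_zero_add hs, a_zero]; simp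
  rw [h0]
  have hgeo : Summable fun n : ℕ => (c Q)⁻¹ * w * w ^ n :=
    (summable_geometric_of_lt_one hw0 hw1').mul_left _
  calc |∑' n : ℕ, a Q (n + 1) * w ^ (n + 1)| ≤ ∑' n : ℕ, |a Q (n + 1)| * |w| ^ (n + 1) := by
        simpa [Real.norm_eq_abs] using norm_tsum_le_tsum_norm hs'.norm
    _ ≤ ∑' n : ℕ, (c Q)⁻¹ * w * w ^ n := by
        refine Summable.tsum_le_tsum (fun n => ?_) (by simpa [abs_mul, abs_pow] using hs'.abs) hgeo
        rw [abs_of_nonneg hw0, pow_succ']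
        calc |a Q (n + 1)| * (w * w ^ n) ≤ (c Q)⁻¹ * (w * w ^ n) :=
              mul_le_mul_of_nonneg_right (abs_a_le hQ0 hQ1 _)
                (mul_nonneg hw0 (pow_nonneg hw0 n))
          _ = (c Q)⁻¹ * w * w ^ n := by ring
    _ = (c Q)⁻¹ * w * (1 - w)⁻¹ := by rw [tsum_mul_left, tsum_geometric_of_lt_one hw0 hw1']
    _ ≤ w * ((c Q)⁻¹ * (1 - Q)⁻¹) := by
        have h3 : (1 - w)⁻¹ ≤ (1 - Q)⁻¹ := by
          apply inv_anti₀ (by linarith) (by linarith)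
        have h4 : 0 ≤ (c Q)⁻¹ * w := mul_nonneg (inv_nonneg.mpr c_pos.le) hw0
        calc (c Q)⁻¹ * w * (1 - w)⁻¹ ≤ (c Q)⁻¹ * w * (1 - Q)⁻¹ :=
              mul_le_mul_of_nonneg_left h3 h4
          _ = w * ((c Q)⁻¹ * (1 - Q)⁻¹) := by ring


lemma tendsto_eu_one (hQ0 : 0 < Q) (hQ1 : Q < 1) {z : ℝ} (hz0 : 0 ≤ z) (hz1 : z < 1) :
    Tendsto (fun N : ℕ => eu Q (Q ^ N * z)) atTop (𝓝 1) := by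
  have hKz : Tendsto (fun N : ℕ => Q ^ N * (z * ((c Q)⁻¹ * (1 - Q)⁻¹))) atTop (𝓝 0) := by
    simpa using (tendsto_pow_atTop_nhds_zero_of_lt_one hQ0.le hQ1).mul_const
      (z * ((c Q)⁻¹ * (1 - Q)⁻¹))
  have hsq : Tendsto (fun N : ℕ => eu Q (Q ^ N * z) - 1) atTop (𝓝 0) := by
    refine squeeze_zero_norm' ?_ hKz
    filter_upwards [Filter.eventually_ge_atTop 1] with N hN
    have h0 : 0 ≤ Q ^ N * z := mul_nonneg (pow_nonneg hQ0.le N) hz0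
    have h1 : Q ^ N * z ≤ Q := by
      have hp : Q ^ N ≤ Q ^ 1 := pow_le_pow_of_le_one hQ0.le hQ1.le hN
      have : Q ^ N * z ≤ Q ^ N * 1 := mul_le_mul_of_nonneg_left hz1.le (pow_nonneg hQ0.le N)
      simpa [pow_one] using this.trans (by simpa [pow_one] using hp)
    calc ‖eu Q (Q ^ N * z) - 1‖ ≤ Q ^ N * z * ((c Q)⁻¹ * (1 - Q)⁻¹) := by
          simpa [Real.norm_eq_abs] using abs_eu_sub_one hQ0 hQ1 h0 h1
      _ = Q ^ N * (z * ((c Q)⁻¹ * (1 - Q)⁻¹)) := by ring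
  have := hsq.add_const 1
  simpa using this

lemma tendsto_P_eu (hQ0 : 0 < Q) (hQ1 : Q < 1) {z : ℝ} (hz0 : 0 ≤ z) (hz1 : z < 1) :
    Tendsto (fun N : ℕ => P Q z N) atTop (𝓝 (eu Q z)) := by
  have h2 := tendsto_eu_one hQ0 hQ1 hz0 hz1
  have h3 : ∀ᶠ N : ℕ in atTop, eu Q (Q ^ N * z) ≠ 0 := h2.eventually_ne one_ne_zero
  have h4 : Tendsto (fun N : ℕ => eu Q z / eu Q (Q ^ N * z)) atTop (𝓝 (eu Q z)) := by
    have h5 : Tendsto (fun N : ℕ => eu Q z / eu Q (Q ^ N * z)) atTop (𝓝 (eu Q z / 1)) :=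
      tendsto_const_nhds.div h2 one_ne_zero
    rwa [div_one] at h5
  refine h4.congr' ?_
  filter_upwards [h3] with N hN
  rw [eq_comm, eq_div_iff hN]
  exact (eu_iter hQ0 hQ1 hz0 hz1 N).symm

lemma eu_pos (hQ0 : 0 < Q) (hQ1 : Q < 1) {z : ℝ} (hz0 : 0 ≤ z) (hz1 : z < 1) :
    0 < eu Q z := by
  have h1 : Real.exp (-(z / ((1 - z) * (1 - Q)))) ≤ eu Q z :=
    ge_of_tendsto (tendsto_P_eu hQ0 hQ1 hz0 hz1)
      (Filter.Eventually.of_forall fun N => c_le_P hQ0 hQ1 hz0 hz1 N)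
  exact lt_of_lt_of_le (Real.exp_pos _) h1

/-- The q-exponential-type series `h(z) = ∑ z^m / (Q;Q)_m`. -/
noncomputable def hg (Q z : ℝ) : ℝ := ∑' m : ℕ, z ^ m / P Q Q m

lemma summable_hg (hQ0 : 0 < Q) (hQ1 : Q < 1) {z : ℝ} (hz : |z| < 1) :
    Summable fun m : ℕ => z ^ m / P Q Q m := by
  refine Summable.of_norm_bounded (g := fun m => (c Q)⁻¹ * |z| ^ m)
    (((summable_geometric_of_lt_one (abs_nonneg z) hz)).mul_left _) (fun m => ?_)
  have hPpos : 0 < P Q Q m := P_pos hQ0.le hQ1.le hQ0.le hQ1 m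
  rw [Real.norm_eq_abs, abs_div, abs_pow, abs_of_pos hPpos, div_eq_mul_inv, mul_comm]
  refine mul_le_mul_of_nonneg_right ?_ (pow_nonneg (abs_nonneg z) m)
  exact inv_anti₀ c_pos (c_le_PQQ hQ0 hQ1 m)

lemma hg_fun (hQ0 : 0 < Q) (hQ1 : Q < 1) {z : ℝ} (hz0 : 0 ≤ z) (hz1 : z < 1) :
    hg Q (Q * z) = (1 - z) * hg Q z := by
  have habs : |z| < 1 := by rwa [abs_of_nonneg hz0]
  have habs' : |Q * z| < 1 := by
    rw [abs_of_nonneg (mul_nonneg hQ0.le hz0)]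
    nlinarith
  have s1 : Summable fun m => z ^ m / P Q Q m := summable_hg hQ0 hQ1 habs
  have s2 : Summable fun m => (Q * z) ^ m / P Q Q m := summable_hg hQ0 hQ1 habs'
  have key : hg Q z - hg Q (Q * z) = z * hg Q z := by
    rw [hg, hg, ← Summable.tsum_sub s1 s2]
    have hf : Summable fun m => z ^ m / P Q Q m - (Q * z) ^ m / P Q Q m := s1.sub s2
    calc ∑' m : ℕ, (z ^ m / P Q Q m - (Q * z) ^ m / P Q Q m)
        = (z ^ 0 / P Q Q 0 - (Q * z) ^ 0 / P Q Q 0) +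
          ∑' m : ℕ, (z ^ (m + 1) / P Q Q (m + 1) - (Q * z) ^ (m + 1) / P Q Q (m + 1)) :=
          Summable.tsum_eq_zero_add hf
      _ = ∑' m : ℕ, (z ^ (m + 1) / P Q Q (m + 1) - (Q * z) ^ (m + 1) / P Q Q (m + 1)) := by
          simp
      _ = ∑' m : ℕ, z * (z ^ m / P Q Q m) := by
          refine tsum_congr fun m => ?_
          have hP : P Q Q (m + 1) = P Q Q m * (1 - Q ^ (m + 1)) := by
            rw [P_succ, ← pow_succ']
          have hPm : P Q Q m ≠ 0 := (P_pos hQ0.le hQ1.le hQ0.le hQ1 m).ne'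
          have h1 : (1 : ℝ) - Q ^ (m + 1) ≠ 0 := by
            have : Q ^ (m + 1) < 1 := pow_lt_one₀ hQ0.le hQ1 (Nat.succ_ne_zero m)
            linarith
          rw [hP, mul_pow]
          field_simp
          ring
      _ = z * hg Q z := by rw [tsum_mul_left]; rfl
  linear_combination -key

lemma hg_iter (hQ0 : 0 < Q) (hQ1 : Q < 1) {z : ℝ} (hz0 : 0 ≤ z) (hz1 : z < 1) (N : ℕ) :
    hg Q (Q ^ N * z) = P Q z N * hg Q z := by
  induction N with
  | zero => simp [P_zero]
  | succ N ih =>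
    have h0 : 0 ≤ Q ^ N * z := mul_nonneg (pow_nonneg hQ0.le N) hz0
    have h1 : Q ^ N * z < 1 := by
      have : Q ^ N ≤ 1 := pow_le_one₀ hQ0.le hQ1.le
      nlinarith
    have h2 : Q ^ (N + 1) * z = Q * (Q ^ N * z) := by ring
    rw [h2, hg_fun hQ0 hQ1 h0 h1, ih, P_succ]
    ring

lemma abs_hg_sub_one (hQ0 : 0 < Q) (hQ1 : Q < 1) {w : ℝ} (hw0 : 0 ≤ w) (hw1 : w ≤ Q) :
    |hg Q w - 1| ≤ w * ((c Q)⁻¹ * (1 - Q)⁻¹) := by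
  have hw1' : w < 1 := lt_of_le_of_lt hw1 hQ1
  have habs : |w| < 1 := by rwa [abs_of_nonneg hw0]
  have hs : Summable fun m => w ^ m / P Q Q m := summable_hg hQ0 hQ1 habs
  have hs' : Summable fun m => w ^ (m + 1) / P Q Q (m + 1) := by
    exact_mod_cast hs.comp_injective (add_left_injective 1)
  have h0 : hg Q w - 1 = ∑' m : ℕ, w ^ (m + 1) / P Q Q (m + 1) := by
    rw [hg, Summable.tsum_eq_zero_add hs, P_zero]; simp
  rw [h0]
  have hgeo : Summable fun m : ℕ => (c Q)⁻¹ * w * w ^ m :=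
    (summable_geometric_of_lt_one hw0 hw1').mul_left _
  have habs_term : ∀ m : ℕ, |w ^ (m + 1) / P Q Q (m + 1)| ≤ (c Q)⁻¹ * w * w ^ m := by
    intro m
    have hPpos : 0 < P Q Q (m + 1) := P_pos hQ0.le hQ1.le hQ0.le hQ1 (m + 1)
    rw [abs_div, abs_pow, abs_of_pos hPpos, abs_of_nonneg hw0, div_eq_inv_mul]
    calc (P Q Q (m + 1))⁻¹ * w ^ (m + 1) ≤ (c Q)⁻¹ * w ^ (m + 1) :=
          mul_le_mul_of_nonneg_right (inv_anti₀ c_pos (c_le_PQQ hQ0 hQ1 (m + 1)))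
            (pow_nonneg hw0 _)
      _ = (c Q)⁻¹ * w * w ^ m := by rw [pow_succ']; ring
  calc |∑' m : ℕ, w ^ (m + 1) / P Q Q (m + 1)| ≤ ∑' m : ℕ, |w ^ (m + 1) / P Q Q (m + 1)| := by
        simpa only [Real.norm_eq_abs] using norm_tsum_le_tsum_norm hs'.norm
    _ ≤ ∑' m : ℕ, (c Q)⁻¹ * w * w ^ m := Summable.tsum_le_tsum habs_term hs'.abs hgeo
    _ = (c Q)⁻¹ * w * (1 - w)⁻¹ := by rw [tsum_mul_left, tsum_geometric_of_lt_one hw0 hw1']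
    _ ≤ w * ((c Q)⁻¹ * (1 - Q)⁻¹) := by
        have h3 : (1 - w)⁻¹ ≤ (1 - Q)⁻¹ := inv_anti₀ (by linarith) (by linarith)
        have h4 : 0 ≤ (c Q)⁻¹ * w := mul_nonneg (inv_nonneg.mpr c_pos.le) hw0
        calc (c Q)⁻¹ * w * (1 - w)⁻¹ ≤ (c Q)⁻¹ * w * (1 - Q)⁻¹ :=
              mul_le_mul_of_nonneg_left h3 h4
          _ = w * ((c Q)⁻¹ * (1 - Q)⁻¹) := by ring

lemma tendsto_hg_one (hQ0 : 0 < Q) (hQ1 : Q < 1) {z : ℝ} (hz0 : 0 ≤ z) (hz1 : z < 1) :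
    Tendsto (fun N : ℕ => hg Q (Q ^ N * z)) atTop (𝓝 1) := by
  have hKz : Tendsto (fun N : ℕ => Q ^ N * (z * ((c Q)⁻¹ * (1 - Q)⁻¹))) atTop (𝓝 0) := by
    simpa using (tendsto_pow_atTop_nhds_zero_of_lt_one hQ0.le hQ1).mul_const
      (z * ((c Q)⁻¹ * (1 - Q)⁻¹))
  have hsq : Tendsto (fun N : ℕ => hg Q (Q ^ N * z) - 1) atTop (𝓝 0) := by
    refine squeeze_zero_norm' ?_ hKz
    filter_upwards [Filter.eventually_ge_atTop 1] with N hN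
    have h0 : 0 ≤ Q ^ N * z := mul_nonneg (pow_nonneg hQ0.le N) hz0
    have h1 : Q ^ N * z ≤ Q := by
      have hp : Q ^ N ≤ Q ^ 1 := pow_le_pow_of_le_one hQ0.le hQ1.le hN
      have : Q ^ N * z ≤ Q ^ N * 1 := mul_le_mul_of_nonneg_left hz1.le (pow_nonneg hQ0.le N)
      simpa [pow_one] using this.trans (by simpa [pow_one] using hp)
    calc ‖hg Q (Q ^ N * z) - 1‖ ≤ Q ^ N * z * ((c Q)⁻¹ * (1 - Q)⁻¹) := by
          simpa [Real.norm_eq_abs] using abs_hg_sub_one hQ0 hQ1 h0 h1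
      _ = Q ^ N * (z * ((c Q)⁻¹ * (1 - Q)⁻¹)) := by ring
  have := hsq.add_const 1
  simpa using this

lemma eu_mul_hg (hQ0 : 0 < Q) (hQ1 : Q < 1) {z : ℝ} (hz0 : 0 ≤ z) (hz1 : z < 1) :
    eu Q z * hg Q z = 1 := by
  have hA : Tendsto (fun N : ℕ => P Q z N * hg Q z) atTop (𝓝 (eu Q z * hg Q z)) :=
    (tendsto_P_eu hQ0 hQ1 hz0 hz1).mul_const _
  have hB : Tendsto (fun N : ℕ => P Q z N * hg Q z) atTop (𝓝 1) := by
    refine (tendsto_hg_one hQ0 hQ1 hz0 hz1).congr fun N => ?_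
    exact hg_iter hQ0 hQ1 hz0 hz1 N
  exact tendsto_nhds_unique hA hB

lemma eu_tail (hQ0 : 0 < Q) (hQ1 : Q < 1) (m : ℕ) :
    eu Q (Q ^ (m + 1)) * P Q Q m = eu Q Q := by
  have hq0 : (0:ℝ) ≤ Q ^ (m + 1) := pow_nonneg hQ0.le _
  have hq1 : Q ^ (m + 1) < 1 := pow_lt_one₀ hQ0.le hQ1 (Nat.succ_ne_zero m)
  have hA : Tendsto (fun N : ℕ => P Q (Q ^ (m + 1)) N * P Q Q m) atTop
      (𝓝 (eu Q (Q ^ (m + 1)) * P Q Q m)) :=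
    (tendsto_P_eu hQ0 hQ1 hq0 hq1).mul_const _
  have hB : Tendsto (fun N : ℕ => P Q Q (m + N)) atTop (𝓝 (eu Q Q)) := by
    have := (tendsto_P_eu hQ0 hQ1 hQ0.le hQ1 (z := Q)).comp (tendsto_add_atTop_nat m)
    refine this.congr fun N => ?_
    simp [Function.comp, Nat.add_comm]
  have hEq : ∀ N : ℕ, P Q (Q ^ (m + 1)) N * P Q Q m = P Q Q (m + N) := by
    intro N
    rw [P, P, P, Finset.prod_range_add, mul_comm]
    congr 1
    refine Finset.prod_congr rfl fun j _ => ?_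
    congr 1
    rw [← pow_succ', ← pow_add]
    congr 1
    ring
  exact tendsto_nhds_unique hA (hB.congr fun N => (hEq N).symm)


lemma sum_eq (hQ0 : 0 < Q) (hQ1 : Q < 1) {x : ℝ} (hx0 : 0 ≤ x) (hx1 : x < 1) :
    ∑' n : ℕ, a Q n * Q ^ n / (1 - x * Q ^ n) = eu Q Q * hg Q x := by
  set F : ℕ × ℕ → ℝ := fun p => a Q p.1 * Q ^ p.1 * (x * Q ^ p.1) ^ p.2 with hF
  have hxQ : ∀ n : ℕ, 0 ≤ x * Q ^ n ∧ x * Q ^ n < 1 := by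
    intro n
    constructor
    · exact mul_nonneg hx0 (pow_nonneg hQ0.le n)
    · have : Q ^ n ≤ 1 := pow_le_one₀ hQ0.le hQ1.le
      nlinarith
  have hFsum : Summable F := by
    refine Summable.of_norm_bounded (g := fun p : ℕ × ℕ => (c Q)⁻¹ * (Q ^ p.1 * x ^ p.2)) ?_ ?_
    · refine Summable.mul_left _ ?_
      exact (summable_geometric_of_lt_one hQ0.le hQ1).mul_of_nonneg
        (summable_geometric_of_lt_one hx0 hx1)
        (fun n => pow_nonneg hQ0.le n) (fun m => pow_nonneg hx0 m)
    · rintro ⟨n, m⟩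
      have h1 : |(x * Q ^ n) ^ m| ≤ x ^ m := by
        rw [abs_pow, abs_of_nonneg (hxQ n).1]
        refine pow_le_pow_left₀ (hxQ n).1 ?_ m
        have : Q ^ n ≤ 1 := pow_le_one₀ hQ0.le hQ1.le
        nlinarith
      have h2 : |a Q n * Q ^ n| ≤ (c Q)⁻¹ * Q ^ n := by
        rw [abs_mul, abs_of_nonneg (pow_nonneg hQ0.le n)]
        exact mul_le_mul_of_nonneg_right (abs_a_le hQ0 hQ1 n) (pow_nonneg hQ0.le n)
      calc ‖F (n, m)‖ = |a Q n * Q ^ n| * |(x * Q ^ n) ^ m| := by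
            rw [Real.norm_eq_abs, hF, abs_mul]
        _ ≤ ((c Q)⁻¹ * Q ^ n) * x ^ m := by
            refine mul_le_mul h2 h1 (abs_nonneg _) ?_
            exact mul_nonneg (inv_nonneg.mpr c_pos.le) (pow_nonneg hQ0.le n)
        _ = (c Q)⁻¹ * (Q ^ n * x ^ m) := by ring
  have step1 : ∀ n : ℕ, a Q n * Q ^ n / (1 - x * Q ^ n) = ∑' m : ℕ, F (n, m) := by
    intro n
    have hg := hasSum_geometric_of_lt_one (hxQ n).1 (hxQ n).2
    rw [div_eq_mul_inv, ← (hg.mul_left (a Q n * Q ^ n)).tsum_eq]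
  have step2 : ∑' n : ℕ, ∑' m : ℕ, F (n, m) = ∑' m : ℕ, ∑' n : ℕ, F (n, m) :=
    (Summable.tsum_comm (f := fun n m => F (n, m)) hFsum).symm
  have step3 : ∀ m : ℕ, ∑' n : ℕ, F (n, m) = eu Q Q * (x ^ m / P Q Q m) := by
    intro m
    have hPm : P Q Q m ≠ 0 := (P_pos hQ0.le hQ1.le hQ0.le hQ1 m).ne'
    have hterm : ∀ n : ℕ, F (n, m) = a Q n * (Q ^ (m + 1)) ^ n * x ^ m := by
      intro n
      have hexp : (Q ^ (m + 1)) ^ n = Q ^ n * (Q ^ n) ^ m := by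
        rw [← pow_mul, ← pow_mul, ← pow_add]
        congr 1
        ring
      rw [hF]
      simp only
      rw [hexp, mul_pow]
      ring
    calc ∑' n : ℕ, F (n, m) = ∑' n : ℕ, a Q n * (Q ^ (m + 1)) ^ n * x ^ m :=
          tsum_congr hterm
      _ = (∑' n : ℕ, a Q n * (Q ^ (m + 1)) ^ n) * x ^ m := tsum_mul_right
      _ = eu Q (Q ^ (m + 1)) * x ^ m := by rw [eu]
      _ = eu Q Q * (x ^ m / P Q Q m) := by
          have := eu_tail hQ0 hQ1 m
          field_simp
          linear_combination x ^ m * this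
  calc ∑' n : ℕ, a Q n * Q ^ n / (1 - x * Q ^ n) = ∑' n : ℕ, ∑' m : ℕ, F (n, m) :=
        tsum_congr step1
    _ = ∑' m : ℕ, ∑' n : ℕ, F (n, m) := step2
    _ = ∑' m : ℕ, eu Q Q * (x ^ m / P Q Q m) := tsum_congr step3
    _ = eu Q Q * hg Q x := by rw [tsum_mul_left, hg]

lemma abs_log_one_sub_le {a b : ℝ} (ha : 0 ≤ a) (hab : a ≤ b) (hb : b < 1) :
    |Real.log (1 - a)| ≤ a / (1 - b) := by
  have ha1 : 0 < 1 - a := by linarith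
  have h1 : Real.log (1 - a) ≤ 0 := Real.log_nonpos (by linarith) (by linarith)
  have h2 : -(a / (1 - b)) ≤ Real.log (1 - a) := by
    have := Real.log_le_log (Real.exp_pos _) (exp_le_one_sub ha hab hb)
    rwa [Real.log_exp] at this
  rw [abs_of_nonpos h1]
  linarith

lemma hasProd_eu (hQ0 : 0 < Q) (hQ1 : Q < 1) {x : ℝ} (hx0 : 0 ≤ x) (hx1 : x < 1) :
    HasProd (fun j : ℕ => (1 - Q * Q ^ j) / (1 - x * Q ^ j)) (eu Q Q / eu Q x) := by
  have hfpos : ∀ j : ℕ, 0 < (1 - Q * Q ^ j) / (1 - x * Q ^ j) := fun j =>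
    div_pos (factor_pos hQ0.le hQ1.le hQ0.le hQ1 j) (factor_pos hQ0.le hQ1.le hx0 hx1 j)
  set L : ℕ → ℝ := fun j => Real.log ((1 - Q * Q ^ j) / (1 - x * Q ^ j)) with hLdef
  have hL : Summable L := by
    refine Summable.of_norm_bounded (g := fun j => (Q / (1 - Q) + x / (1 - x)) * Q ^ j)
      ((summable_geometric_of_lt_one hQ0.le hQ1).mul_left _) (fun j => ?_)
    have hQj1 : Q ^ j ≤ 1 := pow_le_one₀ hQ0.le hQ1.le
    have hQj0 : 0 ≤ Q ^ j := pow_nonneg hQ0.le j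
    have hl1 : |Real.log (1 - Q * Q ^ j)| ≤ Q * Q ^ j / (1 - Q) :=
      abs_log_one_sub_le (by positivity) (by nlinarith) hQ1
    have hl2 : |Real.log (1 - x * Q ^ j)| ≤ x * Q ^ j / (1 - x) :=
      abs_log_one_sub_le (mul_nonneg hx0 hQj0) (by nlinarith) hx1
    have hsplit : L j = Real.log (1 - Q * Q ^ j) - Real.log (1 - x * Q ^ j) := by
      rw [hLdef]
      exact Real.log_div (factor_pos hQ0.le hQ1.le hQ0.le hQ1 j).ne'
        (factor_pos hQ0.le hQ1.le hx0 hx1 j).ne'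
    calc ‖L j‖ ≤ |Real.log (1 - Q * Q ^ j)| + |Real.log (1 - x * Q ^ j)| := by
          rw [Real.norm_eq_abs, hsplit]; exact abs_sub _ _
      _ ≤ Q * Q ^ j / (1 - Q) + x * Q ^ j / (1 - x) := add_le_add hl1 hl2
      _ = (Q / (1 - Q) + x / (1 - x)) * Q ^ j := by ring
  have hS : HasSum L (∑' j, L j) := hL.hasSum
  have hexp : HasProd (fun j : ℕ => Real.exp (L j)) (Real.exp (∑' j, L j)) := hS.rexp
  have hP : HasProd (fun j : ℕ => (1 - Q * Q ^ j) / (1 - x * Q ^ j))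
      (Real.exp (∑' j, L j)) := by
    refine hexp.congr_fun fun j => ?_
    exact (Real.exp_log (hfpos j)).symm
  have hval : Real.exp (∑' j, L j) = eu Q Q / eu Q x := by
    have hs1 : Tendsto (fun N : ℕ => ∑ j ∈ Finset.range N, L j) atTop (𝓝 (∑' j, L j)) :=
      hS.tendsto_sum_nat
    have hs2 : Tendsto (fun N : ℕ => Real.exp (∑ j ∈ Finset.range N, L j)) atTop
        (𝓝 (Real.exp (∑' j, L j))) := (Real.continuous_exp.tendsto _).comp hs1
    have hs3 : Tendsto (fun N : ℕ => P Q Q N / P Q x N) atTop (𝓝 (eu Q Q / eu Q x)) :=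
      (tendsto_P_eu hQ0 hQ1 hQ0.le hQ1).div (tendsto_P_eu hQ0 hQ1 hx0 hx1)
        (eu_pos hQ0 hQ1 hx0 hx1).ne'
    refine tendsto_nhds_unique (hs2.congr fun N => ?_) hs3
    rw [Real.exp_sum]
    rw [P, P, ← Finset.prod_div_distrib]
    exact Finset.prod_congr rfl fun j _ => Real.exp_log (hfpos j)
  rwa [hval] at hP

end QkAux

open QkAux

theorem qkGamma_series (q : ℝ) (hq0 : 0 < q) (hq1 : q < 1)
    (k : ℕ) (hk : 0 < k) (t : ℝ) (ht : 0 < t) :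
    qkGamma q k t = (1 - q) ^ (1 - t / (k : ℝ)) *
      ∑' n : ℕ, q ^ (k * n * (n + 1) / 2) /
        ((1 - q ^ ((k : ℝ) * (n : ℝ) + t)) * (q ^ k - 1) ^ n * qFact (q ^ k) n) := by
  set Q : ℝ := q ^ k with hQdef
  set x : ℝ := q ^ (t : ℝ) with hxdef
  have hQ0 : 0 < Q := pow_pos hq0 k
  have hQ1 : Q < 1 := pow_lt_one₀ hq0.le hq1 hk.ne'
  have hx0 : 0 < x := Real.rpow_pos_of_pos hq0 t
  have hx1 : x < 1 := Real.rpow_lt_one hq0.le hq1 ht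
  rw [qkGamma]
  congr 1
  have hprod : (∏' j : ℕ, (1 - q ^ ((k : ℝ) * ((j : ℝ) + 1))) / (1 - q ^ (t + (j : ℝ) * (k : ℝ))))
      = eu Q Q / eu Q x := by
    rw [← (hasProd_eu hQ0 hQ1 hx0.le hx1).tprod_eq]
    refine tprod_congr fun j => ?_
    have h1 : q ^ ((k : ℝ) * ((j : ℝ) + 1)) = Q * Q ^ j := by
      have hc : (k : ℝ) * ((j : ℝ) + 1) = ((k * (j + 1) : ℕ) : ℝ) := by push_cast; ring
      rw [hc, Real.rpow_natCast, pow_mul, pow_succ']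
    have h2 : q ^ (t + (j : ℝ) * (k : ℝ)) = x * Q ^ j := by
      have hc : (j : ℝ) * (k : ℝ) = ((j * k : ℕ) : ℝ) := by push_cast; ring
      rw [Real.rpow_add hq0, hc, Real.rpow_natCast, mul_comm j k, pow_mul]
    rw [h1, h2]
  have hsum : (∑' n : ℕ, q ^ (k * n * (n + 1) / 2) /
        ((1 - q ^ ((k : ℝ) * (n : ℝ) + t)) * (Q - 1) ^ n * qFact Q n))
      = eu Q Q * hg Q x := by
    rw [← sum_eq hQ0 hQ1 hx0.le hx1]
    refine tsum_congr fun n => ?_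
    have hPn : P Q Q n ≠ 0 := (P_pos hQ0.le hQ1.le hQ0.le hQ1 n).ne'
    have hxQ1 : x * Q ^ n < 1 := by
      have : Q ^ n ≤ 1 := pow_le_one₀ hQ0.le hQ1.le
      nlinarith
    have hden0 : (1 : ℝ) - x * Q ^ n ≠ 0 := by linarith
    have h1Q : (1 : ℝ) - Q ≠ 0 := by linarith
    -- numerator
    set s : ℕ := ∑ i ∈ Finset.range n, i with hsdef
    have hnum : q ^ (k * n * (n + 1) / 2) = Q ^ (s + n) := by
      have hgauss : s * 2 = n * (n - 1) := Finset.sum_range_id_mul_two n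
      have h2 : k * n * (n + 1) = (k * (s + n)) * 2 := by
        cases n with
        | zero => simp [hsdef]
        | succ m =>
          have hs' : s * 2 = (m + 1) * m := by simpa using hgauss
          calc k * (m + 1) * (m + 1 + 1) = k * ((m + 1) * m) + k * (m + 1) * 2 := by ring
            _ = k * (s * 2) + k * (m + 1) * 2 := by rw [hs']
            _ = (k * (s + (m + 1))) * 2 := by ring
      have h3 : k * n * (n + 1) / 2 = k * (s + n) := by
        rw [h2]; exact Nat.mul_div_cancel _ (by norm_num)
      rw [h3, hQdef, ← pow_mul]
    -- denominator pieces
    have hden1 : q ^ ((k : ℝ) * (n : ℝ) + t) = x * Q ^ n := by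
      have hc : (k : ℝ) * (n : ℝ) = ((k * n : ℕ) : ℝ) := by push_cast; ring
      rw [Real.rpow_add hq0, hc, Real.rpow_natCast, pow_mul, mul_comm]
    have hqf : qFact Q n = P Q Q n / (1 - Q) ^ n := by
      rw [qFact, Finset.prod_div_distrib, Finset.prod_const, Finset.card_range, P]
      congr 1
      exact Finset.prod_congr rfl fun j _ => by rw [pow_succ']
    have hden2 : (Q - 1) ^ n * qFact Q n = (-1) ^ n * P Q Q n := by
      rw [hqf]
      have : Q - 1 = -(1 - Q) := by ring
      rw [this, neg_pow]
      field_simp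
    rw [hnum, hden1, mul_assoc, hden2, a, pow_add]
    field_simp
    ring_nf
    have hsgn : ((-1 : ℝ)) ^ (n * 2) = 1 := by
      rw [mul_comm, pow_mul]; norm_num
    rw [hsgn]
    ring
  rw [hprod, hsum]
  have hinv : (eu Q x)⁻¹ = hg Q x :=
    inv_eq_of_mul_eq_one_right (eu_mul_hg hQ0 hQ1 hx0.le hx1)
  rw [div_eq_mul_inv, hinv]
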